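/- Corollary 2 (point identification of the ideal point): Let i, j, k ∈ 𝒜 and suppose N_j = {i, j} ∈ 𝒩 and N_k = {i, k} ∈ 𝒩. Suppose the dataset {p^N}_{N∈𝒩} is consistent with the general linear-in-means model, that p_i^{N_j} ≠ p_j^{N_j} and p_i^{N_k} ≠ p_k^{N_k} (i.e. N_j, N_k ∈ 𝒩_i^{ext}), and that the vectors p_i^{N_j} − p_j^{N_j} and p_i^{N_k} − p_k^{N_k} in ℝ^X are linearly independent. Then the set ⋂_{N∈𝒩_i} co⁻¹(Δ(p^N), p_i^N) is a singleton; that is, v_i is point identified. -/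

import Mathlib

open Finset
open scoped Classical

noncomputable section

/-- The simplex Δ(X) of probability vectors on a finite set X. -/
def simplex (X : Type*) [Fintype X] : Set (X → ℝ) :=
  {v | (∀ x, 0 ≤ v x) ∧ (∑ x, v x) = 1}

/-- The inverse cone co⁻¹(Δ(p^N), p_i^N). -/
def invCone {X A : Type*} [Fintype X] [DecidableEq A]
    (p : Finset A → A → X → ℝ) (N : Finset A) (i : A) : Set (X → ℝ) :=
  {v | v ∈ simplex X ∧ ∃ γ : A → ℝ, (∀ j ∈ N.erase i, γ j ≤ 0) ∧
    (∑ j ∈ N, γ j) = 1 ∧ v = ∑ j ∈ N, γ j • p N j}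

/-- Consistency with the general linear-in-means model (GLM). -/
def GLMConsistent {X A : Type*} [Fintype X] [DecidableEq A]
    (𝒩 : Finset (Finset A)) (p : Finset A → A → X → ℝ) : Prop :=
  ∃ v : A → X → ℝ, (∀ i, v i ∈ simplex X) ∧
    ∀ N ∈ 𝒩, ∀ i ∈ N, ∃ π : A → ℝ,
      (∀ j ∈ N, 0 ≤ π j) ∧ 0 < π i ∧ (∑ j ∈ N, π j) = 1 ∧
      p N i = π i • v i + ∑ j ∈ N.erase i, π j • p N j

/-- Corollary 2: point identification of agent i's ideal point from two binary groups
with linearly independent choice differences. -/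
theorem glm_point_identification
    {X A : Type*} [Fintype X] [Fintype A] [DecidableEq A]
    (hX : 2 ≤ Fintype.card X) (hA : 2 ≤ Fintype.card A)
    (𝒩 : Finset (Finset A)) (h𝒩 : 𝒩.Nonempty) (h𝒩' : ∀ N ∈ 𝒩, N.Nonempty)
    (p : Finset A → A → X → ℝ) (hp : ∀ N ∈ 𝒩, ∀ i ∈ N, p N i ∈ simplex X)
    (i j k : A)
    (hNj : ({i, j} : Finset A) ∈ 𝒩) (hNk : ({i, k} : Finset A) ∈ 𝒩)
    (hGLM : GLMConsistent 𝒩 p)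
    (hextj : p ({i, j} : Finset A) i ≠ p ({i, j} : Finset A) j)
    (hextk : p ({i, k} : Finset A) i ≠ p ({i, k} : Finset A) k)
    (hli : LinearIndependent ℝ
      ![p ({i, j} : Finset A) i - p ({i, j} : Finset A) j,
        p ({i, k} : Finset A) i - p ({i, k} : Finset A) k]) :
    ∃ v : X → ℝ, (⋂ N ∈ 𝒩.filter (fun N => i ∈ N), invCone p N i) = {v} := by
  classical
  obtain ⟨v, hvS, hπ⟩ := hGLM
  have hij : i ≠ j := by rintro rfl; exact hextj rfl
  have hik : i ≠ k := by rintro rfl; exact hextk rfl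
  -- v i belongs to every inverse cone
  have hA : ∀ N ∈ 𝒩, i ∈ N → v i ∈ invCone p N i := by
    intro N hN hiN
    obtain ⟨π, hπ0, hπi, hπsum, heq⟩ := hπ N hN i hiN
    have hπine : (π i : ℝ) ≠ 0 := ne_of_gt hπi
    refine ⟨hvS i, fun l => if l = i then (π i)⁻¹ else -(π l / π i), ?_, ?_, ?_⟩
    · intro l hl
      dsimp only
      rw [if_neg (Finset.ne_of_mem_erase hl)]
      exact neg_nonpos.mpr (div_nonneg (hπ0 l (Finset.mem_of_mem_erase hl)) hπi.le)
    · dsimp only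
      rw [← Finset.add_sum_erase N _ hiN, if_pos rfl]
      have hrw : ∑ l ∈ N.erase i, (if l = i then (π i)⁻¹ else -(π l / π i))
          = -((∑ l ∈ N.erase i, π l) / π i) := by
        rw [Finset.sum_div, ← Finset.sum_neg_distrib]
        exact Finset.sum_congr rfl fun l hl => by
          rw [if_neg (Finset.ne_of_mem_erase hl)]
      rw [hrw]
      have hes : ∑ l ∈ N.erase i, π l = 1 - π i := by
        have := Finset.add_sum_erase N π hiN
        linarith [this.symm ▸ hπsum]
      rw [hes]; field_simp; ring
    · dsimp only
      rw [← Finset.add_sum_erase N _ hiN, if_pos rfl]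
      have hrw : ∑ l ∈ N.erase i, (if l = i then (π i)⁻¹ else -(π l / π i)) • p N l
          = -((π i)⁻¹ • ∑ l ∈ N.erase i, π l • p N l) := by
        rw [Finset.smul_sum, ← Finset.sum_neg_distrib]
        refine Finset.sum_congr rfl fun l hl => ?_
        rw [if_neg (Finset.ne_of_mem_erase hl), smul_smul, ← neg_smul]
        congr 1
        field_simp
      rw [hrw]
      have : (π i)⁻¹ • (π i • v i) = v i := by
        rw [smul_smul, inv_mul_cancel₀ hπine, one_smul]
      rw [← this]
      have hiv : π i • v i = p N i - ∑ l ∈ N.erase i, π l • p N l := by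
        rw [heq]; abel
      rw [hiv, smul_sub]; abel
  -- membership in a binary cone puts the point on a line
  have hB : ∀ l : A, i ≠ l → ∀ w ∈ invCone p ({i, l} : Finset A) i,
      ∃ c : ℝ, w - p ({i, l} : Finset A) i
        = c • (p ({i, l} : Finset A) i - p ({i, l} : Finset A) l) := by
    intro l hil w hw
    obtain ⟨-, γ, hγneg, hγsum, hγeq⟩ := hw
    have hsum : γ i + γ l = 1 := by rwa [Finset.sum_pair hil] at hγsum
    refine ⟨-γ l, ?_⟩
    rw [hγeq, Finset.sum_pair hil]
    funext x
    simp only [Pi.add_apply, Pi.sub_apply, Pi.smul_apply, smul_eq_mul]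
    linear_combination (p ({i, l} : Finset A) i x) * hsum
  have hvj : v i ∈ invCone p ({i, j} : Finset A) i := hA _ hNj (by simp)
  have hvk : v i ∈ invCone p ({i, k} : Finset A) i := hA _ hNk (by simp)
  have key : ∀ w, w ∈ invCone p ({i, j} : Finset A) i →
      w ∈ invCone p ({i, k} : Finset A) i → w = v i := by
    intro w hwj hwk
    obtain ⟨c1, h1⟩ := hB j hij w hwj
    obtain ⟨c2, h2⟩ := hB k hik w hwk
    obtain ⟨c1', h1'⟩ := hB j hij (v i) hvj
    obtain ⟨c2', h2'⟩ := hB k hik (v i) hvk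
    set d1 := p ({i, j} : Finset A) i - p ({i, j} : Finset A) j with hd1
    set d2 := p ({i, k} : Finset A) i - p ({i, k} : Finset A) k with hd2
    have e1 : w - v i = (c1 - c1') • d1 := by
      rw [sub_smul, ← h1, ← h1']; abel
    have e2 : w - v i = (c2 - c2') • d2 := by
      rw [sub_smul, ← h2, ← h2']; abel
    have h0 : (c1 - c1') • d1 + (-(c2 - c2')) • d2 = 0 := by
      rw [neg_smul, ← e1, ← e2]; abel
    obtain ⟨hz, -⟩ := LinearIndependent.pair_iff.mp hli _ _ h0
    have : w - v i = 0 := by rw [e1, hz, zero_smul]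
    exact sub_eq_zero.mp this
  refine ⟨v i, ?_⟩
  ext w
  simp only [Set.mem_iInter, Set.mem_singleton_iff, Finset.mem_filter]
  constructor
  · intro h
    exact key w (h _ ⟨hNj, Finset.mem_insert_self i {j}⟩)
      (h _ ⟨hNk, Finset.mem_insert_self i {k}⟩)
  · rintro rfl N hN
    exact hA N hN.1 hN.2
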